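/- Let s ≥ 2 be an integer. Then there exists n₀ such that for all n ≥ n₀, ex_3(n, BM_{s+1} ∪ {F_7}) = ex_3(s, {F_6}) + C(s, 2)·(n−s), where F_7 is the Fano plane and F_6 is the 3-graph obtained from F_7 by deleting one vertex. -/

import Mathlib

open Finset

/-- `H` is an `r`-uniform hypergraph (an `r`-graph): every hyperedge has exactly `r` vertices. -/
def IsUniform {V : Type*} (r : ℕ) (H : Finset (Finset V)) : Prop :=
  ∀ e ∈ H, e.card = r

/-- `H` contains a Berge copy of the graph with edge set `F`: there are an injection `g`
of the vertices of `F` into the vertices of `H` and an injection `φ` of the edges of `F`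
into the hyperedges of `H` such that `g '' e ⊆ φ e` for every edge `e` of `F`. -/
def ContainsBerge {α V : Type*} [DecidableEq α] [DecidableEq V]
    (F : Finset (Finset α)) (H : Finset (Finset V)) : Prop :=
  ∃ (g : α → V) (φ : Finset α → Finset V),
    Function.Injective g ∧ Set.InjOn φ ↑F ∧
      (∀ e ∈ F, φ e ∈ H) ∧ ∀ e ∈ F, e.image g ⊆ φ e

/-- `H` contains a copy (a subhypergraph isomorphic to) of the hypergraph with
vertex set `A` and edge set `F`. -/
def ContainsCopy {α V : Type*} [DecidableEq α] [DecidableEq V]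
    (A : Finset α) (F : Finset (Finset α)) (H : Finset (Finset V)) : Prop :=
  ∃ g : α → V, Set.InjOn g ↑A ∧ ∀ e ∈ F, e.image g ∈ H

/-- The edge set of the matching `M_t` consisting of `t` pairwise disjoint edges. -/
def matchingHG (t : ℕ) : Finset (Finset (Fin t × Fin 2)) :=
  Finset.univ.image fun i : Fin t => ({(i, 0), (i, 1)} : Finset (Fin t × Fin 2))

/-- The Turán number: the maximum number of hyperedges in an `r`-graph on `n` vertices
satisfying the freeness predicate `Free`. -/
noncomputable def exr (n r : ℕ) (Free : Finset (Finset (Fin n)) → Prop) : ℕ :=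
  sSup {m | ∃ H : Finset (Finset (Fin n)), IsUniform r H ∧ Free H ∧ H.card = m}

/-- The Fano plane `F₇` (on vertices `0, …, 6`, corresponding to `1, …, 7`). -/
def fanoPlane : Finset (Finset (Fin 7)) :=
  {{0, 1, 2}, {0, 3, 4}, {1, 3, 5}, {2, 4, 5}, {0, 5, 6}, {1, 4, 6}, {2, 3, 6}}

/-- The `3`-graph `F₆` obtained from the Fano plane by deleting the vertex `7`. -/
def fanoMinus : Finset (Finset (Fin 6)) :=
  {{0, 1, 2}, {0, 3, 4}, {1, 3, 5}, {2, 4, 5}}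


section FanoAux

def delMap : Fin 7 → Fin 6 → Fin 7 :=
  ![![1, 3, 5, 6, 4, 2], ![0, 3, 4, 6, 5, 2], ![0, 3, 4, 5, 6, 1], ![0, 1, 2, 6, 5, 4],
    ![0, 1, 2, 5, 6, 3], ![0, 1, 2, 4, 3, 6], ![0, 1, 2, 3, 4, 5]]

lemma delMap_spec : ∀ v₀ : Fin 7, Function.Injective (delMap v₀) ∧ (∀ i, delMap v₀ i ≠ v₀) ∧
    ∀ e ∈ fanoMinus, e.image (delMap v₀) ∈ fanoPlane := by decide

lemma fano_cover : ∀ u v : Fin 7, u ≠ v → ∃ e ∈ fanoPlane, u ∈ e ∧ v ∈ e := by decide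

lemma fanoPlane_mem1 : ({0,1,2} : Finset (Fin 7)) ∈ fanoPlane := by decide
lemma fanoMinus_mem1 : ({0,1,2} : Finset (Fin 6)) ∈ fanoMinus := by decide

def extMap {α : Type*} (g : Fin 6 → α) (w : α) : Fin 7 → α :=
  fun v => if h : (v : ℕ) < 6 then g ⟨v, h⟩ else w

variable {α : Type*} (g : Fin 6 → α) (w : α)
@[simp] lemma extMap_0 : extMap g w 0 = g 0 := rfl
@[simp] lemma extMap_1 : extMap g w 1 = g 1 := rfl
@[simp] lemma extMap_2 : extMap g w 2 = g 2 := rfl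
@[simp] lemma extMap_3 : extMap g w 3 = g 3 := rfl
@[simp] lemma extMap_4 : extMap g w 4 = g 4 := rfl
@[simp] lemma extMap_5 : extMap g w 5 = g 5 := rfl
@[simp] lemma extMap_6 : extMap g w 6 = w := rfl

end FanoAux


section Sys
variable {n : ℕ}

def pairEdge {t : ℕ} (i : Fin t) : Finset (Fin t × Fin 2) := {(i, 0), (i, 1)}

lemma pairEdge_mem {t : ℕ} (i : Fin t) : pairEdge i ∈ matchingHG t :=
  mem_image.2 ⟨i, mem_univ _, rfl⟩

lemma mem_matchingHG {t : ℕ} {e : Finset (Fin t × Fin 2)} (he : e ∈ matchingHG t) :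
    ∃ i, e = pairEdge i := by
  obtain ⟨i, _, rfl⟩ := mem_image.1 he; exact ⟨i, rfl⟩

lemma pairEdge_inj {t : ℕ} {i j : Fin t} (h : pairEdge i = pairEdge j) : i = j := by
  have h0 : (i, (0:Fin 2)) ∈ pairEdge j := by
    rw [← h]; simp [pairEdge]
  simp only [pairEdge, mem_insert, mem_singleton, Prod.ext_iff] at h0
  rcases h0 with ⟨h1, _⟩ | ⟨_, h2⟩
  · exact h1
  · exact absurd h2 (by decide)

def SysP {t : ℕ} (H : Finset (Finset (Fin n))) (p : Fin t → Fin n × Fin n)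
    (h : Fin t → Finset (Fin n)) : Prop :=
  Function.Injective h ∧ (∀ i, h i ∈ H) ∧ (∀ i, (p i).1 ∈ h i ∧ (p i).2 ∈ h i) ∧
  (∀ i j, (p i).1 ≠ (p j).2) ∧ (∀ i j, i ≠ j → (p i).1 ≠ (p j).1 ∧ (p i).2 ≠ (p j).2)

lemma containsBerge_of_sys {t : ℕ} {H : Finset (Finset (Fin n))}
    {p : Fin t → Fin n × Fin n} {h : Fin t → Finset (Fin n)} (hs : SysP H p h) :
    ContainsBerge (matchingHG t) H := by
  obtain ⟨hinj, hmem, hin, hne1, hne2⟩ := hs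
  have two : ∀ j : Fin 2, j = 0 ∨ j = 1 := by decide
  set g : Fin t × Fin 2 → Fin n := fun q => if q.2 = 0 then (p q.1).1 else (p q.1).2 with hg
  set φ : Finset (Fin t × Fin 2) → Finset (Fin n) :=
    fun e => if hc : ∃ i : Fin t, e = pairEdge i then h hc.choose else ∅ with hφ
  have hφpe : ∀ i : Fin t, φ (pairEdge i) = h i := by
    intro i
    have hc : ∃ j : Fin t, pairEdge i = pairEdge j := ⟨i, rfl⟩
    have := hc.choose_spec
    simp only [hφ, dif_pos hc]
    rw [pairEdge_inj this.symm]
  refine ⟨g, φ, ?_, ?_, ?_, ?_⟩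
  · rintro ⟨i, a⟩ ⟨j, b⟩ hij
    simp only [hg] at hij
    rcases two a with rfl | rfl <;> rcases two b with rfl | rfl
    · rw [if_pos rfl, if_pos rfl] at hij
      rcases eq_or_ne i j with rfl | hij'
      · rfl
      · exact absurd hij ((hne2 i j hij').1)
    · rw [if_pos rfl, if_neg (by decide)] at hij
      exact absurd hij (hne1 i j)
    · rw [if_neg (by decide), if_pos rfl] at hij
      exact absurd hij.symm (hne1 j i)
    · rw [if_neg (by decide), if_neg (by decide)] at hij
      rcases eq_or_ne i j with rfl | hij'
      · rfl
      · exact absurd hij ((hne2 i j hij').2)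
  · intro e he e' he' hee
    obtain ⟨i, rfl⟩ := mem_matchingHG he
    obtain ⟨j, rfl⟩ := mem_matchingHG he'
    rw [hφpe, hφpe] at hee
    rw [hinj hee]
  · intro e he
    obtain ⟨i, rfl⟩ := mem_matchingHG he
    rw [hφpe]; exact hmem i
  · intro e he
    obtain ⟨i, rfl⟩ := mem_matchingHG he
    rw [hφpe]
    have : (pairEdge i).image g = {(p i).1, (p i).2} := by
      simp [pairEdge, hg, Finset.image_insert]
    rw [this]
    exact insert_subset (hin i).1 (by simpa using (hin i).2)

end Sys


lemma greedy {n : ℕ} (H : Finset (Finset (Fin n))) (d₀ : ℕ) :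
    ∀ (t : ℕ) (v : Fin t → Fin n), Function.Injective v →
    (∀ i, d₀ ≤ (H.filter (fun e => v i ∈ e)).card) →
    ∀ (W : Finset (Fin n)) (E₀ : Finset (Finset (Fin n))),
      (∀ i, v i ∉ W) →
      2 ^ (W.card + 2 * t + 1) + E₀.card + t ≤ d₀ →
      ∃ (p : Fin t → Fin n × Fin n) (h : Fin t → Finset (Fin n)),
        SysP H p h ∧ (∀ i, (p i).1 = v i) ∧
        (∀ i, (p i).2 ∉ W ∧ ∀ j, (p i).2 ≠ v j) ∧ (∀ i, h i ∉ E₀) := by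
  intro t
  induction t with
  | zero =>
    intro v _ _ W E₀ _ _
    exact ⟨Fin.elim0, Fin.elim0, ⟨fun i => i.elim0, fun i => i.elim0, fun i => i.elim0,
      fun i => i.elim0, fun i => i.elim0⟩, fun i => i.elim0, fun i => i.elim0, fun i => i.elim0⟩
  | succ t IH =>
    intro v hvinj hdeg W E₀ hvW hbud
    set Bad : Finset (Fin n) := W ∪ (univ.image v) with hBad
    have hBadcard : Bad.card ≤ W.card + (t + 1) := by
      refine le_trans (card_union_le _ _) ?_
      have h1 := card_image_le (s := (univ : Finset (Fin (t+1)))) (f := v)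
      have h2 : (univ : Finset (Fin (t+1))).card = t + 1 := by simp
      omega
    have hgood : ∃ e ∈ H, v 0 ∈ e ∧ e ∉ E₀ ∧ ¬ e ⊆ Bad := by
      by_contra hcon
      push_neg at hcon
      have hsub : H.filter (fun e => v 0 ∈ e) ⊆ E₀ ∪ Bad.powerset := by
        intro e he
        rw [mem_filter] at he
        by_cases heE : e ∈ E₀
        · exact mem_union_left _ heE
        · exact mem_union_right _ (mem_powerset.2 (hcon e he.1 he.2 heE))
      have hcard : (H.filter (fun e => v 0 ∈ e)).card ≤ E₀.card + 2 ^ Bad.card := by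
        calc (H.filter (fun e => v 0 ∈ e)).card ≤ (E₀ ∪ Bad.powerset).card :=
              card_le_card hsub
          _ ≤ E₀.card + Bad.powerset.card := card_union_le _ _
          _ = E₀.card + 2 ^ Bad.card := by rw [card_powerset]
      have h1 : d₀ ≤ E₀.card + 2 ^ Bad.card := le_trans (hdeg 0) hcard
      have h2 : 2 ^ Bad.card ≤ 2 ^ (W.card + 2 * (t + 1)) :=
        Nat.pow_le_pow_right (by norm_num) (by omega)
      have h3 : 2 ^ (W.card + 2 * (t + 1) + 1) = 2 * 2 ^ (W.card + 2 * (t + 1)) := by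
        rw [pow_succ]; ring
      have h4 : 1 ≤ 2 ^ (W.card + 2 * (t + 1)) := Nat.one_le_two_pow
      omega
    obtain ⟨e, heH, hv0e, heE₀, hesub⟩ := hgood
    obtain ⟨x₀, hx₀e, hx₀Bad⟩ := Finset.not_subset.1 hesub
    have hx₀W : x₀ ∉ W := fun h => hx₀Bad (mem_union_left _ h)
    have hx₀v : ∀ j, x₀ ≠ v j := fun j h =>
      hx₀Bad (mem_union_right _ (mem_image.2 ⟨j, mem_univ _, h.symm⟩))
    obtain ⟨p', h', ⟨hinj', hmem', hin', hne1', hne2'⟩, hp1', hp2', hE'⟩ :=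
      IH (fun i => v i.succ) (fun i j hij => Fin.succ_injective _ (hvinj hij))
        (fun i => hdeg i.succ) (insert (v 0) (insert x₀ W)) (insert e E₀)
        (fun i => by
          simp only [mem_insert]
          push_neg
          refine ⟨fun h => Fin.succ_ne_zero i (hvinj h), fun h => hx₀Bad ?_, hvW i.succ⟩
          exact mem_union_right _ (mem_image.2 ⟨i.succ, mem_univ _, h⟩))
        (by
          have hW2 : (insert (v 0) (insert x₀ W)).card ≤ W.card + 2 := by
            refine le_trans (card_insert_le _ _) ?_
            have := card_insert_le x₀ W
            omega
          have hE2 : (insert e E₀).card ≤ E₀.card + 1 := card_insert_le _ _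
          have hp : 2 ^ ((insert (v 0) (insert x₀ W)).card + 2 * t + 1) ≤
              2 ^ (W.card + 2 * (t + 1) + 1) :=
            Nat.pow_le_pow_right (by norm_num) (by omega)
          omega)
    have hne' : ∀ b, h' b ≠ e := fun b hh => hE' b (by rw [hh]; exact mem_insert_self _ _)
    have hp2'W : ∀ i, (p' i).2 ∉ W ∧ (p' i).2 ≠ v 0 ∧ (p' i).2 ≠ x₀ := by
      intro i
      have := (hp2' i).1
      simp only [mem_insert] at this
      push_neg at this
      exact ⟨this.2.2, this.1, this.2.1⟩
    refine ⟨Fin.cons (v 0, x₀) p', Fin.cons e h', ⟨?_, ?_, ?_, ?_, ?_⟩, ?_, ?_, ?_⟩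
    · intro a b hab
      induction a using Fin.cases with
      | zero =>
        induction b using Fin.cases with
        | zero => rfl
        | succ b =>
          simp only [Fin.cons_zero, Fin.cons_succ] at hab
          exact absurd hab.symm (hne' b)
      | succ a =>
        induction b using Fin.cases with
        | zero =>
          simp only [Fin.cons_zero, Fin.cons_succ] at hab
          exact absurd hab (hne' a)
        | succ b =>
          simp only [Fin.cons_succ] at hab
          rw [hinj' hab]
    · intro i
      induction i using Fin.cases with
      | zero => exact heH
      | succ i => exact hmem' i
    · intro i
      induction i using Fin.cases with
      | zero => exact ⟨hv0e, hx₀e⟩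
      | succ i => exact hin' i
    · intro i j
      induction i using Fin.cases with
      | zero =>
        induction j using Fin.cases with
        | zero =>
          simp only [Fin.cons_zero]
          exact fun h => hx₀v 0 h.symm
        | succ j =>
          simp only [Fin.cons_zero, Fin.cons_succ]
          exact fun h => (hp2'W j).2.1 h.symm
      | succ i =>
        induction j using Fin.cases with
        | zero =>
          simp only [Fin.cons_zero, Fin.cons_succ]
          rw [hp1' i]
          exact fun h => hx₀v i.succ h.symm
        | succ j => exact hne1' i j
    · intro i j hij
      induction i using Fin.cases with
      | zero =>
        induction j using Fin.cases with
        | zero => exact absurd rfl hij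
        | succ j =>
          simp only [Fin.cons_zero, Fin.cons_succ]
          constructor
          · rw [hp1' j]
            exact fun h => Fin.succ_ne_zero j (hvinj h.symm)
          · exact fun h => (hp2'W j).2.2 h.symm
      | succ i =>
        induction j using Fin.cases with
        | zero =>
          simp only [Fin.cons_zero, Fin.cons_succ]
          constructor
          · rw [hp1' i]
            exact fun h => Fin.succ_ne_zero i (hvinj h)
          · exact (hp2'W i).2.2
        | succ j =>
          exact hne2' i j (fun h => hij (by rw [h]))
    · intro i
      induction i using Fin.cases with
      | zero => rfl
      | succ i => exact hp1' i
    · intro i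
      induction i using Fin.cases with
      | zero =>
        refine ⟨hx₀W, ?_⟩
        intro j
        exact hx₀v j
      | succ i =>
        refine ⟨(hp2'W i).1, ?_⟩
        intro j
        induction j using Fin.cases with
        | zero => exact (hp2'W i).2.1
        | succ j => exact (hp2' i).2 j
    · intro i
      induction i using Fin.cases with
      | zero => exact heE₀
      | succ i => exact fun h => hE' i (mem_insert_of_mem h)


lemma lowdeg {n : ℕ} (H : Finset (Finset (Fin n))) (D : Finset (Fin n)) (d₀ : ℕ)
    (hD : ∀ a : Fin n, a ∉ D → (H.filter (fun e => a ∈ e)).card < d₀) :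
    ∀ (t : ℕ) (S : Finset (Finset (Fin n))), S ⊆ H →
      (∀ e ∈ S, ∃ a b, a ∈ e ∧ b ∈ e ∧ a ≠ b ∧ a ∉ D ∧ b ∉ D) →
      t * (2 * d₀) < S.card →
      ∃ (p : Fin t → Fin n × Fin n) (h : Fin t → Finset (Fin n)), SysP S p h := by
  intro t
  induction t with
  | zero =>
    intro S _ _ _
    exact ⟨Fin.elim0, Fin.elim0, fun i => i.elim0, fun i => i.elim0, fun i => i.elim0,
      fun i => i.elim0, fun i => i.elim0⟩
  | succ t IH =>
    intro S hSH hlow hcard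
    have hS0 : S.Nonempty := card_pos.1 (by omega)
    obtain ⟨e, heS⟩ := hS0
    obtain ⟨a, b, hae, hbe, hab, haD, hbD⟩ := hlow e heS
    set S' : Finset (Finset (Fin n)) := S.filter (fun f => a ∉ f ∧ b ∉ f) with hS'
    have hsplit : S ⊆ S' ∪ (S.filter (fun f => a ∈ f)) ∪ (S.filter (fun f => b ∈ f)) := by
      intro f hf
      by_cases hfa : a ∈ f
      · exact mem_union_left _ (mem_union_right _ (mem_filter.2 ⟨hf, hfa⟩))
      · by_cases hfb : b ∈ f
        · exact mem_union_right _ (mem_filter.2 ⟨hf, hfb⟩)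
        · exact mem_union_left _ (mem_union_left _ (mem_filter.2 ⟨hf, hfa, hfb⟩))
    have hfa : (S.filter (fun f => a ∈ f)).card < d₀ :=
      lt_of_le_of_lt (card_le_card (fun f hf => by
        rw [mem_filter] at hf ⊢; exact ⟨hSH hf.1, hf.2⟩)) (hD a haD)
    have hfb : (S.filter (fun f => b ∈ f)).card < d₀ :=
      lt_of_le_of_lt (card_le_card (fun f hf => by
        rw [mem_filter] at hf ⊢; exact ⟨hSH hf.1, hf.2⟩)) (hD b hbD)
    have hcard' : t * (2 * d₀) < S'.card := by
      have h1 := card_le_card hsplit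
      have h2 := card_union_le (S' ∪ S.filter (fun f => a ∈ f)) (S.filter (fun f => b ∈ f))
      have h3 := card_union_le S' (S.filter (fun f => a ∈ f))
      have h4 : (t + 1) * (2 * d₀) = t * (2 * d₀) + 2 * d₀ := by ring
      omega
    obtain ⟨p', h', hinj', hmem', hin', hne1', hne2'⟩ :=
      IH S' (fun f hf => hSH (mem_filter.1 hf).1)
        (fun f hf => hlow f (mem_filter.1 hf).1) hcard'
    have hS'ab : ∀ i, a ∉ h' i ∧ b ∉ h' i := fun i => (mem_filter.1 (hmem' i)).2
    have hane : ∀ i, h' i ≠ e := fun i hh => (hS'ab i).1 (hh ▸ hae)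
    refine ⟨Fin.cons (a, b) p', Fin.cons e h', ?_, ?_, ?_, ?_, ?_⟩
    · intro i j hij
      induction i using Fin.cases with
      | zero =>
        induction j using Fin.cases with
        | zero => rfl
        | succ j =>
          simp only [Fin.cons_zero, Fin.cons_succ] at hij
          exact absurd hij.symm (hane j)
      | succ i =>
        induction j using Fin.cases with
        | zero =>
          simp only [Fin.cons_zero, Fin.cons_succ] at hij
          exact absurd hij (hane i)
        | succ j =>
          simp only [Fin.cons_succ] at hij
          rw [hinj' hij]
    · intro i
      induction i using Fin.cases with
      | zero => exact heS
      | succ i => exact (mem_filter.1 (hmem' i)).1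
    · intro i
      induction i using Fin.cases with
      | zero => exact ⟨hae, hbe⟩
      | succ i => exact hin' i
    · intro i j
      induction i using Fin.cases with
      | zero =>
        induction j using Fin.cases with
        | zero => exact hab
        | succ j =>
          simp only [Fin.cons_zero, Fin.cons_succ]
          exact fun h => (hS'ab j).1 (h ▸ (hin' j).2)
      | succ i =>
        induction j using Fin.cases with
        | zero =>
          simp only [Fin.cons_zero, Fin.cons_succ]
          exact fun h => (hS'ab i).2 (h ▸ (hin' i).1)
        | succ j => exact hne1' i j
    · intro i j hij
      induction i using Fin.cases with
      | zero =>
        induction j using Fin.cases with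
        | zero => exact absurd rfl hij
        | succ j =>
          simp only [Fin.cons_zero, Fin.cons_succ]
          exact ⟨fun h => (hS'ab j).1 (h ▸ (hin' j).1), fun h => (hS'ab j).2 (h ▸ (hin' j).2)⟩
      | succ i =>
        induction j using Fin.cases with
        | zero =>
          simp only [Fin.cons_zero, Fin.cons_succ]
          exact ⟨fun h => (hS'ab i).1 (h.symm ▸ (hin' i).1), fun h => (hS'ab i).2 (h.symm ▸ (hin' i).2)⟩
        | succ j => exact hne2' i j (fun h => hij (by rw [h]))


lemma exr_bdd (n r : ℕ) (P : Finset (Finset (Fin n)) → Prop) :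
    BddAbove {m | ∃ H : Finset (Finset (Fin n)), IsUniform r H ∧ P H ∧ H.card = m} := by
  refine ⟨Fintype.card (Finset (Fin n)), ?_⟩
  rintro m ⟨H, -, -, rfl⟩
  exact Finset.card_le_univ H |>.trans (by simp)

lemma le_exr {n r : ℕ} {P : Finset (Finset (Fin n)) → Prop} {H : Finset (Finset (Fin n))}
    (hu : IsUniform r H) (hp : P H) : H.card ≤ exr n r P :=
  le_csSup (exr_bdd n r P) ⟨H, hu, hp, rfl⟩

lemma exr_le {n r : ℕ} {P : Finset (Finset (Fin n)) → Prop} {B : ℕ} (hP : P ∅)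
    (hb : ∀ H : Finset (Finset (Fin n)), IsUniform r H → P H → H.card ≤ B) :
    exr n r P ≤ B := by
  refine csSup_le ⟨0, ∅, fun e he => absurd he (notMem_empty e), hP, rfl⟩ ?_
  rintro m ⟨H, hu, hp, rfl⟩
  exact hb H hu hp

lemma exr_witness {n r : ℕ} {P : Finset (Finset (Fin n)) → Prop} (hP : P ∅) :
    ∃ H : Finset (Finset (Fin n)), IsUniform r H ∧ P H ∧ H.card = exr n r P := by
  have hne : {m | ∃ H : Finset (Finset (Fin n)), IsUniform r H ∧ P H ∧ H.card = m}.Nonempty :=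
    ⟨0, ∅, fun e he => absurd he (notMem_empty e), hP, rfl⟩
  exact Nat.sSup_mem hne (exr_bdd n r P)

-- cross-edge structure/counting
variable {n : ℕ}

lemma mem_crossAll {D : Finset (Fin n)} {e : Finset (Fin n)} (he3 : e.card = 3)
    (h2 : (e ∩ D).card = 2) :
    e ∈ ((D.powersetCard 2) ×ˢ ((univ : Finset (Fin n)) \ D)).image
      (fun q => insert q.2 q.1) := by
  have hsd : (e \ D).card = 1 := by
    have := Finset.card_inter_add_card_sdiff e D
    omega
  obtain ⟨w, hw⟩ := card_eq_one.1 hsd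
  have hwe : w ∈ e \ D := hw ▸ mem_singleton_self w
  refine mem_image.2 ⟨(e ∩ D, w), mem_product.2 ⟨mem_powersetCard.2
    ⟨inter_subset_right, h2⟩, mem_sdiff.2 ⟨mem_univ _, (mem_sdiff.1 hwe).2⟩⟩, ?_⟩
  show insert w (e ∩ D) = e
  rw [insert_eq, ← hw, sdiff_union_inter]

lemma crossAll_card {D : Finset (Fin n)} :
    (((D.powersetCard 2) ×ˢ ((univ : Finset (Fin n)) \ D)).image
      (fun q => insert q.2 q.1)).card = Nat.choose D.card 2 * (n - D.card) := by
  rw [card_image_of_injOn, card_product, card_powersetCard, card_sdiff_of_subset (subset_univ D)]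
  · simp
  · rintro ⟨p, w⟩ hpw ⟨p', w'⟩ hpw' hins
    simp only [mem_coe, mem_product, mem_powersetCard, mem_sdiff] at hpw hpw'
    obtain ⟨⟨hpD, hp2⟩, -, hwD⟩ := hpw
    obtain ⟨⟨hp'D, hp'2⟩, -, hw'D⟩ := hpw'
    simp only at hins
    have hpp : p = p' := by
      have h1 : p = (insert w p) ∩ D := by
        ext x
        simp only [mem_inter, mem_insert]
        constructor
        · exact fun hx => ⟨Or.inr hx, hpD hx⟩
        · rintro ⟨hx | hx, hxD⟩
          · exact absurd (hx ▸ hxD) hwD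
          · exact hx
      have h2' : p' = (insert w' p') ∩ D := by
        ext x
        simp only [mem_inter, mem_insert]
        constructor
        · exact fun hx => ⟨Or.inr hx, hp'D hx⟩
        · rintro ⟨hx | hx, hxD⟩
          · exact absurd (hx ▸ hxD) hw'D
          · exact hx
      rw [h1, h2', hins]
    subst hpp
    have hww : w = w' := by
      have : w ∈ insert w' p := hins ▸ mem_insert_self w p
      rcases mem_insert.1 this with h | h
      · exact h
      · exact absurd (hpD h) hwD
    rw [hww]
section Lower

lemma lower_bound (s n : ℕ) (hs : 2 ≤ s) (hn : s ≤ n)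
    (G : Finset (Finset (Fin s))) (hGu : IsUniform 3 G)
    (hGf : ¬ ContainsCopy Finset.univ fanoMinus G) :
    ∃ H : Finset (Finset (Fin n)), IsUniform 3 H ∧
      (¬ ContainsBerge (matchingHG (s+1)) H ∧ ¬ ContainsCopy Finset.univ fanoPlane H) ∧
      H.card = G.card + Nat.choose s 2 * (n - s) := by
  classical
  set ι : Fin s → Fin n := Fin.castLE hn with hι
  have hιinj : Function.Injective ι := Fin.castLE_injective hn
  set Dset : Finset (Fin n) := univ.image ι with hDset
  have hDcard : Dset.card = s := by
    rw [hDset, card_image_of_injective _ hιinj, card_univ, Fintype.card_fin]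
  have hval : ∀ v ∈ Dset, (v : ℕ) < s := by
    intro v hv
    obtain ⟨x, -, rfl⟩ := mem_image.1 hv
    exact x.isLt
  have hιval : ∀ x : Fin s, ((ι x : Fin n) : ℕ) = (x : ℕ) := fun x => rfl
  set ρ : Fin n → Fin s := fun v => if h : (v : ℕ) < s then ⟨v, h⟩ else ⟨0, by omega⟩ with hρ
  have hρι : ∀ x : Fin s, ρ (ι x) = x := by
    intro x
    simp only [hρ, hιval, x.isLt, dif_pos]
  have hρD : ∀ x ∈ Dset, ∀ y ∈ Dset, ρ x = ρ y → x = y := by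
    intro x hx y hy hxy
    have hx' := hval x hx
    have hy' := hval y hy
    rw [hρ] at hxy
    simp only [dif_pos hx', dif_pos hy'] at hxy
    have hv : ((⟨(x : ℕ), hx'⟩ : Fin s) : ℕ) = ((⟨(y : ℕ), hy'⟩ : Fin s) : ℕ) :=
      congrArg Fin.val hxy
    exact Fin.ext hv
  set inside : Finset (Finset (Fin n)) := G.image (fun f => f.image ι) with hinside
  set cross : Finset (Finset (Fin n)) :=
    ((Dset.powersetCard 2) ×ˢ ((univ : Finset (Fin n)) \ Dset)).image
      (fun q => insert q.2 q.1) with hcross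
  set H : Finset (Finset (Fin n)) := inside ∪ cross with hH
  have hinsideD : ∀ e ∈ inside, e ⊆ Dset := by
    intro e he
    obtain ⟨f, -, rfl⟩ := mem_image.1 he
    exact image_subset_image (subset_univ f)
  have hcrossStruct : ∀ e ∈ cross, ∃ p w, p ⊆ Dset ∧ p.card = 2 ∧ w ∉ Dset ∧ e = insert w p := by
    intro e he
    obtain ⟨⟨p, w⟩, hpw, rfl⟩ := mem_image.1 he
    rw [mem_product, mem_powersetCard, mem_sdiff] at hpw
    exact ⟨p, w, hpw.1.1, hpw.1.2, hpw.2.2, rfl⟩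
  have hkey : ∀ e ∈ H, (e \ Dset).card ≤ 1 := by
    intro e he
    rcases mem_union.1 he with he' | he'
    · have : e \ Dset = ∅ := sdiff_eq_empty_iff_subset.2 (hinsideD e he')
      simp [this]
    · obtain ⟨p, w, hpD, -, hwD, rfl⟩ := hcrossStruct _ he'
      refine le_trans (card_le_card ?_) (le_of_eq (card_singleton w))
      intro x hx
      rw [mem_sdiff, mem_insert] at hx
      rcases hx.1 with rfl | hxp
      · exact mem_singleton_self x
      · exact absurd (hpD hxp) hx.2
  have hsubD : ∀ e ∈ H, e ⊆ Dset → ∃ f ∈ G, e = f.image ι := by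
    intro e he hesub
    rcases mem_union.1 he with he' | he'
    · obtain ⟨f, hf, rfl⟩ := mem_image.1 he'
      exact ⟨f, hf, rfl⟩
    · obtain ⟨p, w, -, -, hwD, rfl⟩ := hcrossStruct _ he'
      exact absurd (hesub (mem_insert_self w p)) hwD
  refine ⟨H, ?_, ⟨?_, ?_⟩, ?_⟩
  · -- uniform
    intro e he
    rcases mem_union.1 he with he' | he'
    · obtain ⟨f, hf, rfl⟩ := mem_image.1 he'
      rw [card_image_of_injective _ hιinj]
      exact hGu f hf
    · obtain ⟨p, w, hpD, hp2, hwD, rfl⟩ := hcrossStruct _ he'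
      rw [card_insert_of_notMem (fun hwp => hwD (hpD hwp)), hp2]
  · -- Berge-free
    rintro ⟨g, φ, hg, hφinj, hφmem, hφsub⟩
    have hpair : ∀ i : Fin (s+1), g (i, 0) ∈ φ (pairEdge i) ∧ g (i, 1) ∈ φ (pairEdge i) := by
      intro i
      exact ⟨hφsub _ (pairEdge_mem i) (mem_image_of_mem g (by simp [pairEdge])),
        hφsub _ (pairEdge_mem i) (mem_image_of_mem g (by simp [pairEdge]))⟩
    have hone : ∀ i : Fin (s+1), g (i, 0) ∈ Dset ∨ g (i, 1) ∈ Dset := by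
      intro i
      by_contra hcon
      push_neg at hcon
      have hmem' : φ (pairEdge i) ∈ H := hφmem _ (pairEdge_mem i)
      have hsub2 : ({g (i, 0), g (i, 1)} : Finset (Fin n)) ⊆ φ (pairEdge i) \ Dset := by
        intro x hx
        rcases mem_insert.1 hx with rfl | hx
        · exact mem_sdiff.2 ⟨(hpair i).1, hcon.1⟩
        · rw [mem_singleton] at hx
          subst hx
          exact mem_sdiff.2 ⟨(hpair i).2, hcon.2⟩
      have h2 : ({g (i, 0), g (i, 1)} : Finset (Fin n)).card = 2 := by
        rw [card_insert_of_notMem, card_singleton]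
        rw [mem_singleton]
        intro h
        have h2 : (0 : Fin 2) = 1 := congrArg Prod.snd (hg h)
        exact absurd h2 (by decide)
      have hb := card_le_card hsub2
      have hk := hkey _ hmem'
      omega
    set c : Fin (s+1) → Fin n := fun i => if g (i, 0) ∈ Dset then g (i, 0) else g (i, 1) with hc
    have hcD : ∀ i, c i ∈ Dset := by
      intro i
      by_cases h : g (i, 0) ∈ Dset
      · simp only [hc, if_pos h]
        exact h
      · simp only [hc, if_neg h]
        exact (hone i).resolve_left h
    have hcinj : Set.InjOn c ↑(univ : Finset (Fin (s+1))) := by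
      intro i _ j _ hij
      have hci : c i = g (i, 0) ∨ c i = g (i, 1) := by
        simp only [hc]; split <;> simp
      have hcj : c j = g (j, 0) ∨ c j = g (j, 1) := by
        simp only [hc]; split <;> simp
      rcases hci with h1 | h1 <;> rcases hcj with h2 | h2 <;>
        · rw [h1, h2] at hij
          exact congrArg Prod.fst (hg hij)
    have hle := card_le_card_of_injOn c (fun i _ => hcD i) hcinj
    rw [card_univ, Fintype.card_fin, hDcard] at hle
    omega
  · -- Fano-free
    rintro ⟨gg, hgginj', hggmem⟩
    have hgginj : Function.Injective gg := fun a b h => hgginj' (by simp) (by simp) h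
    have hv₀ : ∃ v₀ : Fin 7, ∀ u, u ≠ v₀ → gg u ∈ Dset := by
      by_cases hall : ∀ u, gg u ∈ Dset
      · exact ⟨6, fun u _ => hall u⟩
      · push_neg at hall
        obtain ⟨v₀, hv₀D⟩ := hall
        refine ⟨v₀, fun u hu => ?_⟩
        by_contra huD
        obtain ⟨e, heF, hue, hv₀e⟩ := fano_cover u v₀ hu
        have heeH : e.image gg ∈ H := hggmem e heF
        have h2 : ({gg u, gg v₀} : Finset (Fin n)) ⊆ e.image gg \ Dset := by
          intro x hx
          rcases mem_insert.1 hx with rfl | hx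
          · exact mem_sdiff.2 ⟨mem_image_of_mem gg hue, huD⟩
          · rw [mem_singleton] at hx
            subst hx
            exact mem_sdiff.2 ⟨mem_image_of_mem gg hv₀e, hv₀D⟩
        have hcard2 : ({gg u, gg v₀} : Finset (Fin n)).card = 2 := by
          rw [card_insert_of_notMem, card_singleton]
          rw [mem_singleton]
          exact fun h => hu (hgginj h)
        have hb := card_le_card h2
        have hk := hkey _ heeH
        omega
    obtain ⟨v₀, hout⟩ := hv₀
    obtain ⟨hτinj, hτne, hτmem⟩ := delMap_spec v₀
    refine hGf ⟨fun i => ρ (gg (delMap v₀ i)), ?_, ?_⟩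
    · intro i _ j _ hij
      have hi : gg (delMap v₀ i) ∈ Dset := hout _ (hτne i)
      have hj : gg (delMap v₀ j) ∈ Dset := hout _ (hτne j)
      exact hτinj (hgginj (hρD _ hi _ hj hij))
    · intro e he
      have hτe : (e.image (delMap v₀)) ∈ fanoPlane := hτmem e he
      have hsub : (e.image (delMap v₀)).image gg ⊆ Dset := by
        intro x hx
        obtain ⟨u, hu, rfl⟩ := mem_image.1 hx
        obtain ⟨i, -, rfl⟩ := mem_image.1 hu
        exact hout _ (hτne i)
      obtain ⟨f, hf, hfe⟩ := hsubD _ (hggmem _ hτe) hsub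
      have heq : e.image (fun i => ρ (gg (delMap v₀ i))) = f := by
        have h1 : e.image (fun i => ρ (gg (delMap v₀ i))) =
            ((e.image (delMap v₀)).image gg).image ρ := by
          rw [image_image, image_image]
          rfl
        rw [h1, hfe, image_image]
        calc f.image (ρ ∘ ι) = f.image id := image_congr (fun x _ => hρι x)
          _ = f := image_id
      rw [heq]
      exact hf
  · -- cardinality
    have hdisj : Disjoint inside cross := by
      rw [disjoint_left]
      intro e he hec
      obtain ⟨p, w, hpD, -, hwD, rfl⟩ := hcrossStruct _ hec
      exact hwD (hinsideD _ he (mem_insert_self w p))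
    rw [hH, card_union_of_disjoint hdisj]
    congr 1
    · rw [hinside, card_image_of_injective _ (Finset.image_injective hιinj)]
    · rw [hcross, crossAll_card, hDcard]

end Lower
lemma sysP_cons {n t : ℕ} {H : Finset (Finset (Fin n))} {p : Fin t → Fin n × Fin n}
    {h : Fin t → Finset (Fin n)} (hs : SysP H p h) (a b : Fin n) (e : Finset (Fin n))
    (heH : e ∈ H) (hae : a ∈ e) (hbe : b ∈ e) (hab : a ≠ b)
    (henh : ∀ i, e ≠ h i)
    (ha1 : ∀ i, a ≠ (p i).1) (ha2 : ∀ i, a ≠ (p i).2)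
    (hb1 : ∀ i, b ≠ (p i).1) (hb2 : ∀ i, b ≠ (p i).2) :
    SysP H (Fin.cons (a, b) p) (Fin.cons e h) := by
  obtain ⟨hinj, hmem, hin, hne1, hne2⟩ := hs
  refine ⟨?_, ?_, ?_, ?_, ?_⟩
  · intro i j hij
    induction i using Fin.cases with
    | zero =>
      induction j using Fin.cases with
      | zero => rfl
      | succ j =>
        simp only [Fin.cons_zero, Fin.cons_succ] at hij
        exact absurd hij (henh j)
    | succ i =>
      induction j using Fin.cases with
      | zero =>
        simp only [Fin.cons_zero, Fin.cons_succ] at hij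
        exact absurd hij.symm (henh i)
      | succ j =>
        simp only [Fin.cons_succ] at hij
        rw [hinj hij]
  · intro i
    induction i using Fin.cases with
    | zero => exact heH
    | succ i => exact hmem i
  · intro i
    induction i using Fin.cases with
    | zero => exact ⟨hae, hbe⟩
    | succ i => exact hin i
  · intro i j
    induction i using Fin.cases with
    | zero =>
      induction j using Fin.cases with
      | zero => exact hab
      | succ j =>
        simp only [Fin.cons_zero, Fin.cons_succ]
        exact ha2 j
    | succ i =>
      induction j using Fin.cases with
      | zero =>
        simp only [Fin.cons_zero, Fin.cons_succ]
        exact fun hh => hb1 i hh.symm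
      | succ j => exact hne1 i j
  · intro i j hij
    induction i using Fin.cases with
    | zero =>
      induction j using Fin.cases with
      | zero => exact absurd rfl hij
      | succ j =>
        simp only [Fin.cons_zero, Fin.cons_succ]
        exact ⟨ha1 j, hb2 j⟩
    | succ i =>
      induction j using Fin.cases with
      | zero =>
        simp only [Fin.cons_zero, Fin.cons_succ]
        exact ⟨fun hh => ha1 i hh.symm, fun hh => hb2 i hh.symm⟩
      | succ j => exact hne2 i j (fun hh => hij (by rw [hh]))
section Upper

lemma upper_bound (s n : ℕ) (hs : 2 ≤ s)
    (hn : s + (s + 1) * (2 * (2 ^ (2 * s + 4) + s + 2)) + Nat.choose s 3 +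
      Nat.choose s 2 * s + 1 ≤ n)
    (H : Finset (Finset (Fin n))) (hu : IsUniform 3 H)
    (hBfree : ¬ ContainsBerge (matchingHG (s + 1)) H)
    (hFfree : ¬ ContainsCopy Finset.univ fanoPlane H) :
    H.card ≤ exr s 3 (fun G => ¬ ContainsCopy Finset.univ fanoMinus G) +
      Nat.choose s 2 * (n - s) := by
  classical
  set d₀ : ℕ := 2 ^ (2 * s + 4) + s + 2 with hd₀
  set D : Finset (Fin n) := univ.filter (fun v => d₀ ≤ (H.filter (fun e => v ∈ e)).card) with hD
  have hmemD : ∀ v, v ∈ D ↔ d₀ ≤ (H.filter (fun e => v ∈ e)).card := by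
    intro v
    rw [hD, mem_filter]
    exact ⟨fun h => h.2, fun h => ⟨mem_univ v, h⟩⟩
  have hDle : D.card ≤ s := by
    by_contra hcon
    push_neg at hcon
    obtain ⟨T, hTD, hTcard⟩ := exists_subset_card_eq (s := D) (n := s + 1) hcon
    set v : Fin (s + 1) → Fin n := fun i => ↑(T.orderIsoOfFin hTcard i) with hv
    have hvinj : Function.Injective v := fun i j hij =>
      (T.orderIsoOfFin hTcard).injective (Subtype.ext hij)
    have hvdeg : ∀ i, d₀ ≤ (H.filter (fun e => v i ∈ e)).card := fun i =>
      (hmemD _).1 (hTD (T.orderIsoOfFin hTcard i).2)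
    obtain ⟨p, h, hsys, -, -, -⟩ :=
      greedy H d₀ (s + 1) v hvinj hvdeg ∅ ∅ (fun i => notMem_empty _)
        (by
          rw [card_empty, card_empty]
          have hp : 2 ^ (0 + 2 * (s + 1) + 1) ≤ 2 ^ (2 * s + 4) :=
            Nat.pow_le_pow_right (by norm_num) (by omega)
          omega)
    exact hBfree (containsBerge_of_sys hsys)
  rcases eq_or_lt_of_le hDle with hDs | hDlt
  · -- case |D| = s
    have hstray : ∀ e ∈ H, 2 ≤ (e ∩ D).card := by
      intro e heH
      by_contra hcon
      push_neg at hcon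
      have h3 := hu e heH
      have h2 : 1 < (e \ D).card := by
        have := Finset.card_inter_add_card_sdiff e D
        omega
      obtain ⟨a, ha, b, hb, hab⟩ := (Finset.one_lt_card (s := e \ D)).1 h2
      rw [mem_sdiff] at ha hb
      set v : Fin s → Fin n := fun i => ↑(D.orderIsoOfFin hDs i) with hv
      have hvinj : Function.Injective v := fun i j hij =>
        (D.orderIsoOfFin hDs).injective (Subtype.ext hij)
      have hvD : ∀ i, v i ∈ D := fun i => (D.orderIsoOfFin hDs i).2
      have hvdeg : ∀ i, d₀ ≤ (H.filter (fun f => v i ∈ f)).card := fun i =>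
        (hmemD _).1 (hvD i)
      obtain ⟨p, h, hsys, hp1, hp2, hE⟩ :=
        greedy H d₀ s v hvinj hvdeg {a, b} {e}
          (fun i => by
            rw [mem_insert, mem_singleton]
            push_neg
            constructor
            · exact fun hh => ha.2 (by rw [← hh]; exact hvD i)
            · exact fun hh => hb.2 (by rw [← hh]; exact hvD i))
          (by
            have hc2 : ({a, b} : Finset (Fin n)).card ≤ 2 := card_insert_le a {b}
            have hc1 : ({e} : Finset (Finset (Fin n))).card = 1 := card_singleton e
            have hpow : 2 ^ (({a, b} : Finset (Fin n)).card + 2 * s + 1) ≤ 2 ^ (2 * s + 4) :=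
              Nat.pow_le_pow_right (by norm_num) (by omega)
            omega)
      refine hBfree (containsBerge_of_sys
        (sysP_cons hsys a b e heH ha.1 hb.1 hab ?_ ?_ ?_ ?_ ?_))
      · exact fun i hh => hE i (by rw [← hh]; exact mem_singleton_self e)
      · intro i
        rw [hp1 i]
        exact fun hh => ha.2 (by rw [hh]; exact hvD i)
      · exact fun i hh => (hp2 i).1 (by rw [← hh]; exact mem_insert_self a {b})
      · intro i
        rw [hp1 i]
        exact fun hh => hb.2 (by rw [hh]; exact hvD i)
      · exact fun i hh => (hp2 i).1 (by rw [← hh]; exact mem_insert_of_mem (mem_singleton_self b))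
    set Hin : Finset (Finset (Fin n)) := H.filter (fun e => e ⊆ D) with hHin
    set Hcr : Finset (Finset (Fin n)) := H.filter (fun e => ¬ e ⊆ D) with hHcr
    have hsum : Hin.card + Hcr.card = H.card := card_filter_add_card_filter_not _
    have hinsub : ∀ e ∈ Hin, e ⊆ D := fun e he => (mem_filter.1 he).2
    have hinH : ∀ e ∈ Hin, e ∈ H := fun e he => (mem_filter.1 he).1
    have hcr2 : ∀ e ∈ Hcr, (e ∩ D).card = 2 := by
      intro e he
      rw [hHcr, mem_filter] at he
      have h1 := hstray e he.1
      have h2 : (e ∩ D).card ≤ e.card := card_le_card inter_subset_left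
      have h3 := hu e he.1
      rcases Nat.lt_or_ge (e ∩ D).card 3 with hlt | hge
      · omega
      · exfalso
        have hEq : e ∩ D = e := eq_of_subset_of_card_le inter_subset_left (by omega)
        exact he.2 (by rw [← hEq]; exact inter_subset_right)
    have hcrsub : Hcr ⊆ ((D.powersetCard 2) ×ˢ ((univ : Finset (Fin n)) \ D)).image
        (fun q => insert q.2 q.1) := fun e he =>
      mem_crossAll (hu e (mem_of_mem_filter e he)) (hcr2 e he)
    have hinle : Hin.card ≤ Nat.choose s 3 := by
      have hsub : Hin ⊆ D.powersetCard 3 := by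
        intro e he
        rw [hHin, mem_filter] at he
        exact mem_powersetCard.2 ⟨he.2, hu e he.1⟩
      calc Hin.card ≤ (D.powersetCard 3).card := card_le_card hsub
        _ = Nat.choose s 3 := by rw [card_powersetCard, hDs]
    by_cases hQ : ∃ g : Fin 6 → Fin n, Function.Injective g ∧ (∀ v, g v ∈ D) ∧
        ∀ e ∈ fanoMinus, e.image g ∈ H
    · -- F6 inside D : many missing cross edges
      obtain ⟨g, hginj, hgD, hgmem⟩ := hQ
      have hmiss : ∀ w, w ∉ D → ∃ mm, (mm = insert w {g 0, g 5} ∨ mm = insert w {g 1, g 4} ∨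
          mm = insert w {g 2, g 3}) ∧ mm ∉ H := by
        intro w hw
        by_contra hcon
        push_neg at hcon
        have h05 : insert w ({g 0, g 5} : Finset (Fin n)) ∈ H := hcon _ (Or.inl rfl)
        have h14 : insert w ({g 1, g 4} : Finset (Fin n)) ∈ H := hcon _ (Or.inr (Or.inl rfl))
        have h23 : insert w ({g 2, g 3} : Finset (Fin n)) ∈ H := hcon _ (Or.inr (Or.inr rfl))
        refine hFfree ⟨extMap g w, ?_, ?_⟩
        · intro a _ b _ hab
          have ha7 := a.isLt
          have hb7 := b.isLt
          by_cases ha6 : (a : ℕ) < 6 <;> by_cases hb6 : (b : ℕ) < 6 <;>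
            simp only [extMap, ha6, hb6, dite_true, dite_false, dif_pos, dif_neg,
              not_false_iff] at hab
          · have hv : ((⟨(a : ℕ), ha6⟩ : Fin 6) : ℕ) = ((⟨(b : ℕ), hb6⟩ : Fin 6) : ℕ) :=
              congrArg Fin.val (hginj hab)
            exact Fin.ext hv
          · exact absurd (by rw [← hab]; exact hgD _) hw
          · exact absurd (by rw [hab]; exact hgD _) hw
          · exact Fin.ext (by omega)
        · intro e he
          have h012 := hgmem {0, 1, 2} (by decide)
          have h034 := hgmem {0, 3, 4} (by decide)
          have h135 := hgmem {1, 3, 5} (by decide)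
          have h245 := hgmem {2, 4, 5} (by decide)
          simp only [image_insert, image_singleton] at h012 h034 h135 h245
          simp only [fanoPlane, mem_insert, mem_singleton] at he
          rcases he with rfl | rfl | rfl | rfl | rfl | rfl | rfl <;>
            simp only [image_insert, image_singleton, extMap_0, extMap_1, extMap_2, extMap_3,
              extMap_4, extMap_5, extMap_6]
          · exact h012
          · exact h034
          · exact h135
          · exact h245
          · have hEq : ({g 0, g 5, w} : Finset (Fin n)) = insert w {g 0, g 5} := by
              ext x; simp only [mem_insert, mem_singleton]; tauto
            rw [hEq]; exact h05
          · have hEq : ({g 1, g 4, w} : Finset (Fin n)) = insert w {g 1, g 4} := by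
              ext x; simp only [mem_insert, mem_singleton]; tauto
            rw [hEq]; exact h14
          · have hEq : ({g 2, g 3, w} : Finset (Fin n)) = insert w {g 2, g 3} := by
              ext x; simp only [mem_insert, mem_singleton]; tauto
            rw [hEq]; exact h23
      set mfun : Fin n → Finset (Fin n) := fun w =>
        if h : ∃ mm, (mm = insert w {g 0, g 5} ∨ mm = insert w {g 1, g 4} ∨
            mm = insert w {g 2, g 3}) ∧ mm ∉ H then h.choose else ∅ with hmfun
      have hmspec : ∀ w, w ∉ D → (mfun w = insert w {g 0, g 5} ∨ mfun w = insert w {g 1, g 4} ∨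
          mfun w = insert w {g 2, g 3}) ∧ mfun w ∉ H := by
        intro w hw
        have hx := hmiss w hw
        simp only [hmfun, dif_pos hx]
        exact hx.choose_spec
      have hcrossmem : ∀ w, w ∉ D →
          (mfun w ∈ ((D.powersetCard 2) ×ˢ ((univ : Finset (Fin n)) \ D)).image
            (fun q => insert q.2 q.1)) ∧ w ∈ mfun w ∧ ∀ x ∈ mfun w, x = w ∨ x ∈ D := by
        intro w hw
        have key : ∀ u v : Fin 6, u ≠ v → mfun w = insert w {g u, g v} →
            (mfun w ∈ ((D.powersetCard 2) ×ˢ ((univ : Finset (Fin n)) \ D)).image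
              (fun q => insert q.2 q.1)) ∧ w ∈ mfun w ∧ ∀ x ∈ mfun w, x = w ∨ x ∈ D := by
          intro u v huv heq
          have hguv : g u ≠ g v := fun hh => huv (hginj hh)
          have hpair : ({g u, g v} : Finset (Fin n)) ∈ D.powersetCard 2 := by
            refine mem_powersetCard.2 ⟨?_, ?_⟩
            · intro x hx
              rcases mem_insert.1 hx with rfl | hx
              · exact hgD u
              · rw [mem_singleton] at hx
                subst hx
                exact hgD v
            · rw [card_insert_of_notMem (fun hh => hguv (mem_singleton.1 hh)), card_singleton]
          refine ⟨mem_image.2 ⟨({g u, g v}, w), mem_product.2 ⟨hpair,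
            mem_sdiff.2 ⟨mem_univ w, hw⟩⟩, heq.symm⟩, ?_, ?_⟩
          · rw [heq]; exact mem_insert_self w _
          · intro x hx
            rw [heq] at hx
            rcases mem_insert.1 hx with rfl | hx
            · exact Or.inl rfl
            · rcases mem_insert.1 hx with rfl | hx
              · exact Or.inr (hgD u)
              · rw [mem_singleton] at hx
                subst hx
                exact Or.inr (hgD v)
        rcases (hmspec w hw).1 with h | h | h
        · exact key 0 5 (by decide) h
        · exact key 1 4 (by decide) h
        · exact key 2 3 (by decide) h
      have hMcard : (((univ : Finset (Fin n)) \ D).image mfun).card = n - s := by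
        rw [card_image_of_injOn, card_sdiff_of_subset (subset_univ D), card_univ, Fintype.card_fin, hDs]
        intro w hw w' hw' hww
        rw [mem_coe, mem_sdiff] at hw hw'
        have h1 := (hcrossmem w hw.2).2.1
        have h2 := (hcrossmem w' hw'.2).2.2
        rw [hww] at h1
        rcases h2 w h1 with h | h
        · exact h
        · exact absurd h hw.2
      have hdisj : Disjoint Hcr (((univ : Finset (Fin n)) \ D).image mfun) := by
        rw [disjoint_right]
        intro mm hmm
        obtain ⟨w, hw, rfl⟩ := mem_image.1 hmm
        rw [mem_sdiff] at hw
        exact fun hmem2 => (hmspec w hw.2).2 (mem_of_mem_filter _ hmem2)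
      have hunion : Hcr ∪ ((univ : Finset (Fin n)) \ D).image mfun ⊆
          ((D.powersetCard 2) ×ˢ ((univ : Finset (Fin n)) \ D)).image
            (fun q => insert q.2 q.1) := by
        refine union_subset hcrsub ?_
        intro mm hmm
        obtain ⟨w, hw, rfl⟩ := mem_image.1 hmm
        rw [mem_sdiff] at hw
        exact (hcrossmem w hw.2).1
      have hcount : Hcr.card + (n - s) ≤ Nat.choose s 2 * (n - s) := by
        have h1 := card_le_card hunion
        rw [card_union_of_disjoint hdisj, hMcard, crossAll_card, hDs] at h1
        exact h1
      have hC3 : Nat.choose s 3 ≤ n - s := by omega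
      omega
    · -- no F6 inside D
      set σf : Fin s → Fin n := fun i => ↑(D.orderIsoOfFin hDs i) with hσf
      have hσinj : Function.Injective σf := fun i j hij =>
        (D.orderIsoOfFin hDs).injective (Subtype.ext hij)
      have hσD : ∀ i, σf i ∈ D := fun i => (D.orderIsoOfFin hDs i).2
      set ρf : Fin n → Fin s := fun v =>
        if h : v ∈ D then (D.orderIsoOfFin hDs).symm ⟨v, h⟩ else ⟨0, by omega⟩ with hρf
      have hσρ : ∀ v ∈ D, σf (ρf v) = v := by
        intro v hv
        simp only [hρf, dif_pos hv, hσf]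
        exact congrArg Subtype.val ((D.orderIsoOfFin hDs).apply_symm_apply ⟨v, hv⟩)
      have hrec : ∀ e, e ⊆ D → (e.image ρf).image σf = e := by
        intro e he
        rw [image_image]
        calc e.image (σf ∘ ρf) = e.image id := image_congr (fun x hx => hσρ x (he hx))
          _ = e := image_id
      set G' : Finset (Finset (Fin s)) := Hin.image (fun e => e.image ρf) with hG'
      have hG'card : G'.card = Hin.card := card_image_of_injOn (by
        intro e he e' he' hee
        rw [mem_coe] at he he'
        dsimp only at hee
        rw [← hrec e (hinsub e he), ← hrec e' (hinsub e' he'), hee])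
      have hG'unif : IsUniform 3 G' := by
        intro f hf
        obtain ⟨e, he, rfl⟩ := mem_image.1 hf
        rw [card_image_of_injOn, hu e (hinH e he)]
        intro x hx y hy hxy
        rw [mem_coe] at hx hy
        have hc := congrArg σf hxy
        rwa [hσρ x (hinsub e he hx), hσρ y (hinsub e he hy)] at hc
      have hG'free : ¬ ContainsCopy Finset.univ fanoMinus G' := by
        rintro ⟨g', hg'inj, hg'mem⟩
        refine hQ ⟨σf ∘ g', ?_, fun v => hσD _, ?_⟩
        · exact hσinj.comp (fun a b hab => hg'inj (by simp) (by simp) hab)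
        · intro e he
          have hmem' := hg'mem e he
          obtain ⟨f, hf, hfe⟩ := mem_image.1 hmem'
          have hEq : e.image (σf ∘ g') = f := by
            rw [← image_image, ← hfe, hrec f (hinsub f hf)]
          rw [hEq]
          exact hinH f hf
      have hle := le_exr (P := fun G => ¬ ContainsCopy Finset.univ fanoMinus G) hG'unif hG'free
      have hcrle : Hcr.card ≤ Nat.choose s 2 * (n - s) := by
        have h1 := card_le_card hcrsub
        rw [crossAll_card, hDs] at h1
        exact h1
      omega
  · -- case |D| < s
    set A : Finset (Finset (Fin n)) := H.filter (fun e => 2 ≤ (e ∩ D).card) with hA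
    set B : Finset (Finset (Fin n)) := H.filter (fun e => ¬ 2 ≤ (e ∩ D).card) with hB
    have hAB : A.card + B.card = H.card := card_filter_add_card_filter_not _
    have hAle : A.card ≤ Nat.choose D.card 2 * n := by
      have hsub : A ⊆ ((D.powersetCard 2) ×ˢ (univ : Finset (Fin n))).image
          (fun q => insert q.2 q.1) := by
        intro e he
        rw [hA, mem_filter] at he
        obtain ⟨p, hpsub, hpcard⟩ := exists_subset_card_eq (s := e ∩ D) (n := 2) he.2
        have hpe : p ⊆ e := hpsub.trans inter_subset_left
        have hpD : p ⊆ D := hpsub.trans inter_subset_right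
        have hne : (e \ p).Nonempty := by
          rw [← card_pos, card_sdiff_of_subset hpe, hu e he.1, hpcard]
          omega
        obtain ⟨x, hx⟩ := hne
        rw [mem_sdiff] at hx
        have hcard : (insert x p).card = 3 := by
          rw [card_insert_of_notMem hx.2, hpcard]
        have hesub : insert x p ⊆ e := insert_subset hx.1 hpe
        have heq : insert x p = e :=
          eq_of_subset_of_card_le hesub (by rw [hcard, hu e he.1])
        exact mem_image.2 ⟨(p, x), mem_product.2 ⟨mem_powersetCard.2 ⟨hpD, hpcard⟩,
          mem_univ x⟩, heq⟩
      calc A.card ≤ _ := card_le_card hsub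
        _ ≤ ((D.powersetCard 2) ×ˢ (univ : Finset (Fin n))).card := card_image_le
        _ = Nat.choose D.card 2 * n := by
          rw [card_product, card_powersetCard, card_univ, Fintype.card_fin]
    have hBle : B.card ≤ (s + 1) * (2 * d₀) := by
      by_contra hcon
      push_neg at hcon
      obtain ⟨p, h, hsys⟩ :=
        lowdeg H D d₀
          (fun a ha => by
            rw [hmemD] at ha
            omega)
          (s + 1) B (filter_subset _ _)
          (fun e he => by
            rw [hB, mem_filter] at he
            have h3 := hu e he.1
            have h2 : 1 < (e \ D).card := by
              have := Finset.card_inter_add_card_sdiff e D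
              omega
            obtain ⟨a, ha, b, hb, hab⟩ := (Finset.one_lt_card (s := e \ D)).1 h2
            rw [mem_sdiff] at ha hb
            exact ⟨a, b, ha.1, hb.1, hab, ha.2, hb.2⟩)
          hcon
      obtain ⟨hinj, hmem, hin, hne1, hne2⟩ := hsys
      exact hBfree (containsBerge_of_sys
        ⟨hinj, fun i => filter_subset _ _ (hmem i), hin, hne1, hne2⟩)
    obtain ⟨m, hm⟩ : ∃ m, s = m + 1 := ⟨s - 1, by omega⟩
    have hdle : Nat.choose D.card 2 ≤ Nat.choose m 2 :=
      Nat.choose_le_choose 2 (by omega)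
    have hsplit : Nat.choose s 2 = Nat.choose m 2 + m := by
      have hss : (m + 1).choose 2 = m.choose 1 + m.choose 2 := Nat.choose_succ_succ m 1
      rw [Nat.choose_one_right] at hss
      rw [hm, hss]
      omega
    have hcm : Nat.choose m 2 ≤ Nat.choose s 2 := Nat.choose_le_choose 2 (by omega)
    have h1 : A.card ≤ Nat.choose m 2 * n := le_trans hAle (Nat.mul_le_mul_right n hdle)
    have h2 : Nat.choose m 2 * n = Nat.choose m 2 * (n - s) + Nat.choose m 2 * s := by
      rw [← Nat.mul_add]
      congr 1
      omega
    have h3 : Nat.choose m 2 * s + (s + 1) * (2 * d₀) ≤ m * (n - s) := by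
      have h4 : Nat.choose m 2 * s ≤ Nat.choose s 2 * s := Nat.mul_le_mul_right s hcm
      have h5 : n - s ≤ m * (n - s) := Nat.le_mul_of_pos_left _ (by omega)
      omega
    have h6 : Nat.choose s 2 * (n - s) = Nat.choose m 2 * (n - s) + m * (n - s) := by
      rw [hsplit, Nat.add_mul]
    calc H.card = A.card + B.card := hAB.symm
      _ ≤ Nat.choose m 2 * n + (s + 1) * (2 * d₀) := add_le_add h1 hBle
      _ = Nat.choose m 2 * (n - s) + (Nat.choose m 2 * s + (s + 1) * (2 * d₀)) := by
          rw [h2, Nat.add_assoc]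
      _ ≤ Nat.choose m 2 * (n - s) + m * (n - s) := Nat.add_le_add_left h3 _
      _ = Nat.choose s 2 * (n - s) := h6.symm
      _ ≤ exr s 3 (fun G => ¬ ContainsCopy Finset.univ fanoMinus G) +
          Nat.choose s 2 * (n - s) := Nat.le_add_left _ _

end Upper

/-- Corollary: for `s ≥ 2` and all sufficiently large `n`,
`ex_3(n, BM_{s+1} ∪ {F₇}) = ex_3(s, {F₆}) + C(s, 2)(n-s)`. -/
theorem exr_berge_matching_and_fano
    (s : ℕ) (hs : 2 ≤ s) :
    ∃ n₀ : ℕ, ∀ n : ℕ, n₀ ≤ n →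
      exr n 3 (fun H => ¬ ContainsBerge (matchingHG (s + 1)) H ∧
          ¬ ContainsCopy Finset.univ fanoPlane H) =
        exr s 3 (fun H => ¬ ContainsCopy Finset.univ fanoMinus H) +
          Nat.choose s 2 * (n - s) := by
  classical
  refine ⟨s + (s + 1) * (2 * (2 ^ (2 * s + 4) + s + 2)) + Nat.choose s 3 +
      Nat.choose s 2 * s + 1, ?_⟩
  intro n hn
  have hsn : s ≤ n := by omega
  have hPempty : (¬ ContainsBerge (matchingHG (s + 1)) (∅ : Finset (Finset (Fin n))) ∧
      ¬ ContainsCopy Finset.univ fanoPlane (∅ : Finset (Finset (Fin n)))) := by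
    constructor
    · rintro ⟨g, φ, -, -, hm, -⟩
      exact absurd (hm (pairEdge 0) (pairEdge_mem 0)) (notMem_empty _)
    · rintro ⟨g, -, hm⟩
      exact absurd (hm _ fanoPlane_mem1) (notMem_empty _)
  have hQempty : ¬ ContainsCopy Finset.univ fanoMinus (∅ : Finset (Finset (Fin s))) := by
    rintro ⟨g, -, hm⟩
    exact absurd (hm _ fanoMinus_mem1) (notMem_empty _)
  apply le_antisymm
  · exact exr_le hPempty (fun H hu hp => upper_bound s n hs hn H hu hp.1 hp.2)
  · obtain ⟨G, hGu, hGf, hGcard⟩ := exr_witness (r := 3)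
      (P := fun H => ¬ ContainsCopy Finset.univ fanoMinus H) hQempty
    obtain ⟨H, hHu, hHf, hHcard⟩ := lower_bound s n hs hsn G hGu hGf
    have hle := le_exr (P := fun H => ¬ ContainsBerge (matchingHG (s + 1)) H ∧
        ¬ ContainsCopy Finset.univ fanoPlane H) hHu hHf
    rw [hHcard, hGcard] at hle
    exact hle
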